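/- Let T > 0 and let V : ℝⁿ → ℝⁿ be Lipschitz continuous, V ∈ C¹(ℝⁿ,ℝⁿ), with ∂V locally Lipschitz with polynomially growing Lipschitz constant. Then there exist C > 0 and q ∈ ℕ* such that for all (θ,x) ∈ [0,T]×ℝⁿ, ‖exp(θV)x − Ψ₂^V(θ,x)‖ ≤ C(1 + ‖x‖^q)θ³. -/

import Mathlib

noncomputable section

open Set intervalIntegral MeasureTheory

/-- Euclidean space ℝⁿ. -/
abbrev Vec (n : ℕ) : Type := EuclideanSpace ℝ (Fin n)

/-- Explicit second-order Runge–Kutta map `Ψ₂^V`. -/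
def rk2 {n : ℕ} (V : Vec n → Vec n) (θ : ℝ) (x : Vec n) : Vec n :=
  x + (θ / 2) • V x + (θ / 2) • V (x + θ • V x)

/-- `φ` is the flow of the vector field `V` : `φ θ x = exp(θV)x`. -/
def IsFlow {n : ℕ} (V : Vec n → Vec n) (φ : ℝ → Vec n → Vec n) : Prop :=
  (∀ x, φ 0 x = x) ∧ ∀ (x : Vec n) (t : ℝ), HasDerivAt (fun s => φ s x) (V (φ t x)) t

/-- `D` is locally Lipschitz with polynomially growing Lipschitz constant. -/
def PolyLocLip {E F : Type*} [NormedAddCommGroup E] [NormedAddCommGroup F]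
    (D : E → F) : Prop :=
  ∃ K : ℝ, 0 ≤ K ∧ ∃ r : ℕ, ∀ x y, ‖D x - D y‖ ≤ K * (1 + ‖x‖ ^ r + ‖y‖ ^ r) * ‖x - y‖

lemma aux_one_add_pow_le (a : ℝ) (ha : 0 ≤ a) (m : ℕ) :
    (1 + a) ^ m ≤ 2 ^ m * (1 + a ^ m) := by
  rcases le_total a 1 with h | h
  · calc (1+a)^m ≤ 2^m := by
          apply pow_le_pow_left₀ (by linarith) (by linarith)
        _ ≤ 2^m * (1 + a^m) := by
          nlinarith [pow_nonneg ha m, pow_pos (by norm_num : (0:ℝ) < 2) m]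
  · calc (1+a)^m ≤ (2*a)^m := by
          apply pow_le_pow_left₀ (by linarith) (by linarith)
        _ = 2^m * a^m := by rw [mul_pow]
        _ ≤ 2^m * (1 + a^m) := by
          nlinarith [pow_pos (by norm_num : (0:ℝ) < 2) m]

lemma aux_gronwall_est (L ε t T : ℝ) (hL : 0 ≤ L) (hε : 0 ≤ ε) (ht : 0 ≤ t) (htT : t ≤ T) :
    gronwallBound 0 L ε t ≤ ε * (t * Real.exp (L * T)) := by
  by_cases hK : L = 0
  · simp [gronwallBound, hK, mul_comm]
  · have hLpos : 0 < L := lt_of_le_of_ne hL (Ne.symm hK)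
    rw [gronwallBound_of_K_ne_0 hK]
    simp only [zero_mul, zero_add]
    have h1 : Real.exp (L*t) - 1 ≤ L * t * Real.exp (L * t) := by
      have := Real.add_one_le_exp (-(L*t))
      have h2 : Real.exp (-(L*t)) = (Real.exp (L*t))⁻¹ := by rw [Real.exp_neg]
      rw [h2] at this
      have hep : 0 < Real.exp (L*t) := Real.exp_pos _
      have hmul := mul_le_mul_of_nonneg_right this (le_of_lt hep)
      have hinv : (Real.exp (L*t))⁻¹ * Real.exp (L*t) = 1 := inv_mul_cancel₀ (ne_of_gt hep)
      nlinarith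
    have h3 : Real.exp (L*t) ≤ Real.exp (L*T) := Real.exp_le_exp.2 (by nlinarith)
    have h4 : ε / L * (Real.exp (L*t) - 1) ≤ ε / L * (L * t * Real.exp (L*T)) := by
      apply mul_le_mul_of_nonneg_left _ (by positivity)
      calc Real.exp (L*t) - 1 ≤ L * t * Real.exp (L*t) := h1
        _ ≤ L * t * Real.exp (L*T) := mul_le_mul_of_nonneg_left h3 (by positivity)
    calc ε / L * (Real.exp (L*t) - 1) ≤ ε / L * (L * t * Real.exp (L*T)) := h4
      _ = ε * (t * Real.exp (L*T)) := by field_simp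

set_option maxHeartbeats 2000000 in
/-- local error of the second-order Runge–Kutta scheme. -/
theorem rk2_local_error {n : ℕ} (T : ℝ) (hT : 0 < T) (V : Vec n → Vec n)
    (hLip : ∃ L : NNReal, LipschitzWith L V)
    (hC1 : ContDiff ℝ 1 V)
    (hJac : PolyLocLip (fun x => fderiv ℝ V x))
    (φ : ℝ → Vec n → Vec n) (hφ : IsFlow V φ) :
    ∃ C : ℝ, 0 < C ∧ ∃ q : ℕ, 1 ≤ q ∧
      ∀ θ ∈ Set.Icc (0 : ℝ) T, ∀ x : Vec n,
        ‖φ θ x - rk2 V θ x‖ ≤ C * (1 + ‖x‖ ^ q) * θ ^ 3 := by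
  obtain ⟨L, hL⟩ := hLip
  obtain ⟨K, hK0, r, hKr⟩ := hJac
  have hL0 : (0:ℝ) ≤ (L:ℝ) := L.coe_nonneg
  have hVdiff : Differentiable ℝ V := hC1.differentiable one_ne_zero
  have hDV : ∀ y : Vec n, ‖fderiv ℝ V y‖ ≤ (L:ℝ) := fun y =>
    norm_fderiv_le_of_lipschitz ℝ hL
  have hVlip : ∀ a b : Vec n, ‖V a - V b‖ ≤ (L:ℝ) * ‖a - b‖ := by
    intro a b
    simpa [dist_eq_norm] using hL.dist_le_mul a b
  have hφcont : ∀ x : Vec n, Continuous fun s => φ s x := fun x =>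
    continuous_iff_continuousAt.2 fun t => (hφ.2 x t).continuousAt
  have hgc : ∀ x : Vec n, Continuous fun s => V (φ s x) := fun x =>
    hL.continuous.comp (hφcont x)
  set E : ℝ := Real.exp ((L:ℝ) * T) with hEdef
  have hEpos : 0 < E := Real.exp_pos _
  have hE1 : 1 ≤ E := Real.one_le_exp (by positivity)
  clear_value E
  set c0 : ℝ := ‖V 0‖ + (L:ℝ) + 1 with hc0def
  have hc0 : 1 ≤ c0 := by
    have := norm_nonneg (V 0); simp only [hc0def]; linarith
  have hc0pos : 0 < c0 := by linarith
  clear_value c0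
  have hV0 : ∀ x : Vec n, ‖V x‖ ≤ c0 * (1 + ‖x‖) := by
    intro x
    have h1 : ‖V x - V 0‖ ≤ (L:ℝ) * ‖x - 0‖ := hVlip x 0
    rw [sub_zero] at h1
    have h2 : ‖V x‖ ≤ ‖V x - V 0‖ + ‖V 0‖ := by
      simpa using norm_add_le (V x - V 0) (V 0)
    have h3 := norm_nonneg x
    have h4 := norm_nonneg (V 0)
    simp only [hc0def]; nlinarith
  -- Grönwall
  have hgr : ∀ x : Vec n, ∀ t ∈ Icc (0:ℝ) T, ‖φ t x - x‖ ≤ c0 * (1 + ‖x‖) * E * t := by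
    intro x t ht
    have key : ∀ s ∈ Icc (0:ℝ) T,
        ‖φ s x - x‖ ≤ gronwallBound 0 (L:ℝ) ‖V x‖ (s - 0) := by
      apply norm_le_gronwallBound_of_norm_deriv_right_le
        (f' := fun s => V (φ s x))
      · exact ((hφcont x).sub continuous_const).continuousOn
      · intro s _; exact ((hφ.2 x s).sub_const x).hasDerivWithinAt
      · simp [hφ.1 x]
      · intro s _
        have h1 := hVlip (φ s x) x
        have h2 : ‖V (φ s x)‖ ≤ ‖V (φ s x) - V x‖ + ‖V x‖ := by
          simpa using norm_add_le (V (φ s x) - V x) (V x)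
        linarith
    have h5 := key t ht
    rw [sub_zero] at h5
    have h6 := aux_gronwall_est (L:ℝ) ‖V x‖ t T hL0 (norm_nonneg _) ht.1 ht.2
    rw [← hEdef] at h6
    have h7 : ‖V x‖ * (t * E) ≤ c0 * (1 + ‖x‖) * E * t := by
      have h8 := hV0 x
      have h9 : 0 ≤ t * E := mul_nonneg ht.1 hEpos.le
      nlinarith [mul_le_mul_of_nonneg_right h8 h9]
    linarith
  -- constants
  set c2 : ℝ := 1 + c0 * E * T with hc2def
  have hc2 : 1 ≤ c2 := by
    have : 0 ≤ c0 * E * T := mul_nonneg (mul_nonneg hc0pos.le hEpos.le) hT.le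
    simp only [hc2def]; linarith
  clear_value c2
  set c3 : ℝ := c0 * (1 + (L:ℝ) * E * T) with hc3def
  have hc3 : 0 < c3 := by
    have h1 : 0 ≤ (L:ℝ) * E * T := mul_nonneg (mul_nonneg hL0 hEpos.le) hT.le
    simp only [hc3def]; nlinarith
  clear_value c3
  set c5 : ℝ := K * (1 + 2 * c2 ^ r) * c3 ^ 2 + (L:ℝ)^2 * c3 with hc5def
  have hc5 : 0 ≤ c5 := by
    have h1 : (0:ℝ) ≤ 1 + 2 * c2 ^ r := by positivity
    have h2 : (0:ℝ) ≤ c3 ^ 2 := sq_nonneg _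
    have h3 : (0:ℝ) ≤ (L:ℝ)^2 * c3 := mul_nonneg (sq_nonneg _) hc3.le
    have h4 := mul_nonneg (mul_nonneg hK0 h1) h2
    simp only [hc5def]; linarith
  clear_value c5
  set c6 : ℝ := 2 * c5 + (L:ℝ)^2 * c0 * E with hc6def
  have hc6 : 0 ≤ c6 := by
    have : (0:ℝ) ≤ (L:ℝ)^2 * c0 * E := by positivity
    simp only [hc6def]; linarith
  clear_value c6
  have hCpos : 0 < c6 * 2 ^ (r+2) + 1 := by
    have : (0:ℝ) ≤ c6 * 2 ^ (r+2) := mul_nonneg hc6 (by positivity)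
    linarith
  refine ⟨c6 * 2 ^ (r+2) + 1, hCpos, r + 2, by omega, ?_⟩
  intro θ hθ x
  obtain ⟨hθ0, hθT⟩ := hθ
  set P : ℝ := 1 + ‖x‖ with hPdef
  have hP1 : 1 ≤ P := by have := norm_nonneg x; simp only [hPdef]; linarith
  have hP0 : 0 < P := by linarith
  clear_value P
  have hsub : Icc (0:ℝ) θ ⊆ Icc (0:ℝ) T := Icc_subset_Icc le_rfl hθT
  have ha : ∀ t ∈ Icc (0:ℝ) T, ‖φ t x - x‖ ≤ c0 * P * E * t := by
    intro t ht; rw [hPdef]; exact hgr x t ht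
  have hb : ∀ t ∈ Icc (0:ℝ) T, ‖φ t x‖ ≤ c2 * P := by
    intro t ht
    have h1 := ha t ht
    have h2 : ‖φ t x‖ ≤ ‖x‖ + ‖φ t x - x‖ := by
      have := norm_add_le x (φ t x - x); simpa [add_sub_cancel] using this
    have h3 : c0 * P * E * t ≤ c0 * P * E * T :=
      mul_le_mul_of_nonneg_left ht.2
        (mul_nonneg (mul_nonneg hc0pos.le hP0.le) hEpos.le)
    have h4 : ‖x‖ ≤ P := by rw [hPdef]; linarith [norm_nonneg x]
    simp only [hc2def]; nlinarith
  have hc : ∀ t ∈ Icc (0:ℝ) T, ‖V (φ t x)‖ ≤ c3 * P := by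
    intro t ht
    have h1 := ha t ht
    have h2 := hVlip (φ t x) x
    have h3 : ‖V (φ t x)‖ ≤ ‖V (φ t x) - V x‖ + ‖V x‖ := by
      simpa using norm_add_le (V (φ t x) - V x) (V x)
    have h4 := hV0 x
    have h5 : c0 * P * E * t ≤ c0 * P * E * T :=
      mul_le_mul_of_nonneg_left ht.2
        (mul_nonneg (mul_nonneg hc0pos.le hP0.le) hEpos.le)
    have h6 : (L:ℝ) * ‖φ t x - x‖ ≤ (L:ℝ) * (c0 * P * E * T) :=
      mul_le_mul_of_nonneg_left (le_trans h1 h5) hL0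
    have h7 : ‖V x‖ ≤ c0 * P := by rw [hPdef]; exact hV0 x
    simp only [hc3def]; nlinarith
  have hd : ∀ s ∈ Icc (0:ℝ) T, ∀ u ∈ Icc (0:ℝ) T,
      ‖φ s x - φ u x‖ ≤ c3 * P * |s - u| := by
    intro s hs u hu
    have := Convex.norm_image_sub_le_of_norm_hasDerivWithin_le
      (f := fun t => φ t x) (f' := fun t => V (φ t x)) (s := Icc (0:ℝ) T)
      (C := c3 * P)
      (fun t _ => (hφ.2 x t).hasDerivWithinAt) hc (convex_Icc 0 T) hu hs
    simpa [Real.norm_eq_abs] using this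
  set g' : ℝ → Vec n := fun t => (fderiv ℝ V (φ t x)) (V (φ t x)) with hg'def
  have hg : ∀ t : ℝ, HasDerivAt (fun s => V (φ s x)) (g' t) t := by
    intro t
    have := (hVdiff (φ t x)).hasFDerivAt.comp_hasDerivAt t (hφ.2 x t)
    rw [hg'def]
    exact this
  clear_value g'
  have hPr : 1 ≤ P ^ r := one_le_pow₀ hP1
  have hPr2 : P ≤ P ^ (r+2) := le_self_pow₀ hP1 (by omega)
  have he : ∀ s ∈ Icc (0:ℝ) T, ∀ u ∈ Icc (0:ℝ) T,
      ‖g' s - g' u‖ ≤ c5 * P ^ (r+2) * |s - u| := by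
    intro s hs u hu
    have hsplit : g' s - g' u =
        (fderiv ℝ V (φ s x) - fderiv ℝ V (φ u x)) (V (φ s x))
          + (fderiv ℝ V (φ u x)) (V (φ s x) - V (φ u x)) := by
      simp only [hg'def, ContinuousLinearMap.sub_apply, map_sub]; abel
    have h1 : ‖(fderiv ℝ V (φ s x) - fderiv ℝ V (φ u x)) (V (φ s x))‖
        ≤ ‖fderiv ℝ V (φ s x) - fderiv ℝ V (φ u x)‖ * ‖V (φ s x)‖ :=
      ContinuousLinearMap.le_opNorm _ _
    have hAB : ‖fderiv ℝ V (φ s x) - fderiv ℝ V (φ u x)‖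
        ≤ K * (1 + ‖φ s x‖ ^ r + ‖φ u x‖ ^ r) * ‖φ s x - φ u x‖ := hKr (φ s x) (φ u x)
    have h2 : ‖(fderiv ℝ V (φ u x)) (V (φ s x) - V (φ u x))‖
        ≤ (L:ℝ) * ‖V (φ s x) - V (φ u x)‖ := by
      calc ‖(fderiv ℝ V (φ u x)) (V (φ s x) - V (φ u x))‖
          ≤ ‖fderiv ℝ V (φ u x)‖ * ‖V (φ s x) - V (φ u x)‖ :=
            ContinuousLinearMap.le_opNorm _ _
        _ ≤ (L:ℝ) * ‖V (φ s x) - V (φ u x)‖ :=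
            mul_le_mul_of_nonneg_right (hDV _) (norm_nonneg _)
    have hps : ‖φ s x‖ ^ r ≤ c2 ^ r * P ^ r := by
      calc ‖φ s x‖ ^ r ≤ (c2 * P) ^ r := pow_le_pow_left₀ (norm_nonneg _) (hb s hs) r
        _ = c2 ^ r * P ^ r := mul_pow _ _ _
    have hpu : ‖φ u x‖ ^ r ≤ c2 ^ r * P ^ r := by
      calc ‖φ u x‖ ^ r ≤ (c2 * P) ^ r := pow_le_pow_left₀ (norm_nonneg _) (hb u hu) r
        _ = c2 ^ r * P ^ r := mul_pow _ _ _
    have hcoef : 1 + ‖φ s x‖ ^ r + ‖φ u x‖ ^ r ≤ (1 + 2 * c2 ^ r) * P ^ r := by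
      have hexp : (1 + 2 * c2 ^ r) * P ^ r = P ^ r + 2 * (c2 ^ r * P ^ r) := by ring
      rw [hexp]
      linarith [hps, hpu, hPr]
    have hφsu := hd s hs u hu
    have hVsu : ‖V (φ s x) - V (φ u x)‖ ≤ (L:ℝ) * (c3 * P * |s - u|) := by
      have h9 := hVlip (φ s x) (φ u x)
      have h10 := mul_le_mul_of_nonneg_left hφsu hL0
      linarith
    have hVs := hc s hs
    have habs : (0:ℝ) ≤ |s - u| := abs_nonneg _
    have hA1 : (0:ℝ) ≤ (1 + 2 * c2 ^ r) * P ^ r := by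
      have := pow_nonneg (le_trans zero_le_one hc2) r
      have := pow_nonneg hP0.le r
      nlinarith
    have hA2 : (0:ℝ) ≤ c3 * P * |s - u| :=
      mul_nonneg (mul_nonneg hc3.le hP0.le) habs
    have hterm1 : ‖fderiv ℝ V (φ s x) - fderiv ℝ V (φ u x)‖ * ‖V (φ s x)‖
        ≤ (K * ((1 + 2 * c2 ^ r) * P ^ r) * (c3 * P * |s - u|)) * (c3 * P) := by
      apply mul_le_mul _ hVs (norm_nonneg _)
        (mul_nonneg (mul_nonneg hK0 hA1) hA2)
      calc ‖fderiv ℝ V (φ s x) - fderiv ℝ V (φ u x)‖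
          ≤ K * (1 + ‖φ s x‖ ^ r + ‖φ u x‖ ^ r) * ‖φ s x - φ u x‖ := hAB
        _ ≤ K * ((1 + 2 * c2 ^ r) * P ^ r) * (c3 * P * |s - u|) := by
            apply mul_le_mul _ hφsu (norm_nonneg _) (mul_nonneg hK0 hA1)
            exact mul_le_mul_of_nonneg_left hcoef hK0
    have hterm2 : (L:ℝ) * ‖V (φ s x) - V (φ u x)‖
        ≤ (L:ℝ) * ((L:ℝ) * (c3 * P * |s - u|)) :=
      mul_le_mul_of_nonneg_left hVsu hL0
    calc ‖g' s - g' u‖ ≤ ‖(fderiv ℝ V (φ s x) - fderiv ℝ V (φ u x)) (V (φ s x))‖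
          + ‖(fderiv ℝ V (φ u x)) (V (φ s x) - V (φ u x))‖ := by
          rw [hsplit]; exact norm_add_le _ _
      _ ≤ (K * ((1 + 2 * c2 ^ r) * P ^ r) * (c3 * P * |s - u|)) * (c3 * P)
          + (L:ℝ) * ((L:ℝ) * (c3 * P * |s - u|)) := by linarith
      _ = (K * (1 + 2 * c2 ^ r) * c3 ^ 2) * (P ^ r * P * P) * |s - u|
          + ((L:ℝ)^2 * c3) * P * |s - u| := by ring
      _ ≤ (K * (1 + 2 * c2 ^ r) * c3 ^ 2) * P ^ (r+2) * |s - u|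
          + ((L:ℝ)^2 * c3) * P ^ (r+2) * |s - u| := by
          have hpp : P ^ r * P * P = P ^ (r+2) := by ring
          rw [hpp]
          have : ((L:ℝ)^2 * c3) * P * |s - u| ≤ ((L:ℝ)^2 * c3) * P ^ (r+2) * |s - u| := by
            apply mul_le_mul_of_nonneg_right _ habs
            exact mul_le_mul_of_nonneg_left hPr2 (mul_nonneg (sq_nonneg _) hc3.le)
          linarith
      _ = c5 * P ^ (r+2) * |s - u| := by simp only [hc5def]; ring
  -- Taylor/trapezoid part
  set m : ℝ := θ / 2 with hmdef
  have hmIcc : m ∈ Icc (0:ℝ) θ := ⟨by simp only [hmdef]; linarith, by simp only [hmdef]; linarith⟩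
  have hmT : m ∈ Icc (0:ℝ) T := hsub hmIcc
  clear_value m
  set gm : Vec n := V (φ m x) with hgmdef
  set Dm : Vec n := g' m with hDmdef
  clear_value gm Dm
  set R : ℝ → Vec n := fun s => V (φ s x) - gm - (s - m) • Dm with hRdef
  have hRm : R m = 0 := by rw [hRdef]; simp [hgmdef]
  have hRd : ∀ u : ℝ, HasDerivAt R (g' u - Dm) u := by
    intro u
    have h1 := (hg u).sub_const gm
    have h2 : HasDerivAt (fun s : ℝ => (s - m) • Dm) Dm u := by
      simpa using ((hasDerivAt_id u).sub_const m).smul_const Dm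
    rw [hRdef]; exact h1.sub h2
  set M : ℝ := c5 * P ^ (r+2) with hMdef
  have hM0 : 0 ≤ M := by
    rw [hMdef]; exact mul_nonneg hc5 (pow_nonneg hP0.le _)
  clear_value M
  have habs_le : ∀ s ∈ Icc (0:ℝ) θ, |s - m| ≤ θ := by
    intro s hs
    rw [abs_le]
    constructor <;> simp only [hmdef] <;> linarith [hs.1, hs.2]
  have hR : ∀ s ∈ Icc (0:ℝ) θ, ‖R s‖ ≤ M * θ * |s - m| := by
    intro s hs
    have := Convex.norm_image_sub_le_of_norm_hasDerivWithin_le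
      (f := R) (f' := fun u => g' u - Dm) (s := Icc (0:ℝ) θ) (C := M * θ)
      (fun u _ => (hRd u).hasDerivWithinAt)
      (fun u hu => by
        have h1 := he u (hsub hu) m hmT
        have h2 := habs_le u hu
        calc ‖g' u - Dm‖ ≤ M * |u - m| := by rw [hDmdef]; exact h1
          _ ≤ M * θ := mul_le_mul_of_nonneg_left h2 hM0)
      (convex_Icc 0 θ) hmIcc hs
    rw [hRm, sub_zero] at this
    calc ‖R s‖ ≤ M * θ * ‖s - m‖ := this
      _ = M * θ * |s - m| := by rw [Real.norm_eq_abs]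
  -- integrals
  have hgint : IntervalIntegrable (fun s => V (φ s x)) volume 0 θ :=
    (hgc x).intervalIntegrable 0 θ
  have hFTC : ∫ s in (0:ℝ)..θ, V (φ s x) = φ θ x - x := by
    have := integral_eq_sub_of_hasDerivAt (f := fun s => φ s x)
      (f' := fun s => V (φ s x)) (a := 0) (b := θ) (fun t _ => hφ.2 x t) hgint
    simpa only [hφ.1 x] using this
  have hlin : (∫ s in (0:ℝ)..θ, (s - m)) = 0 := by
    have h1 : IntervalIntegrable (fun s : ℝ => s) volume 0 θ :=
      continuous_id.intervalIntegrable 0 θ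
    have h2 : IntervalIntegrable (fun _ : ℝ => m) volume 0 θ := intervalIntegrable_const
    rw [intervalIntegral.integral_sub h1 h2, integral_id, intervalIntegral.integral_const,
      smul_eq_mul]
    simp only [hmdef]; ring
  have hRcont : Continuous R := by
    simp only [hRdef]
    exact ((hgc x).sub continuous_const).sub
      ((continuous_id.sub continuous_const).smul continuous_const)
  have hRint : IntervalIntegrable R volume 0 θ := hRcont.intervalIntegrable 0 θ
  have hRI : ∫ s in (0:ℝ)..θ, R s = (φ θ x - x) - θ • gm := by
    have h1 : IntervalIntegrable (fun _ : ℝ => gm) volume 0 θ := intervalIntegrable_const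
    have h2 : IntervalIntegrable (fun s : ℝ => (s - m) • Dm) volume 0 θ :=
      (((continuous_id.sub continuous_const)).smul continuous_const).intervalIntegrable 0 θ
    calc ∫ s in (0:ℝ)..θ, R s
        = (∫ s in (0:ℝ)..θ, (V (φ s x) - gm)) - ∫ s in (0:ℝ)..θ, (s - m) • Dm := by
          rw [← intervalIntegral.integral_sub (hgint.sub h1) h2]
      _ = ((∫ s in (0:ℝ)..θ, V (φ s x)) - ∫ s in (0:ℝ)..θ, gm)
            - (∫ s in (0:ℝ)..θ, (s - m)) • Dm := by
          rw [intervalIntegral.integral_sub hgint h1, intervalIntegral.integral_smul_const]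
      _ = (φ θ x - x) - θ • gm := by
          rw [hFTC, hlin, intervalIntegral.integral_const, zero_smul, sub_zero, sub_zero]
  -- key algebraic identity
  have hkey : φ θ x - rk2 V θ x =
      ((∫ s in (0:ℝ)..θ, R s) - (θ/2) • R 0 - (θ/2) • R θ)
        + (θ/2) • (V (φ θ x) - V (x + θ • V x)) := by
    rw [hRI]
    have hR0 : R 0 = V x - gm - ((0:ℝ) - m) • Dm := by
      simp only [hRdef]; rw [hφ.1 x]
    have hRθ : R θ = V (φ θ x) - gm - (θ - m) • Dm := by simp only [hRdef]
    rw [hR0, hRθ]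
    simp only [rk2, hmdef]
    module
  rw [hkey]
  -- bounds on each piece
  have hIoc : Set.uIoc (0:ℝ) θ ⊆ Icc (0:ℝ) θ := by
    rw [Set.uIoc_of_le hθ0]; exact Ioc_subset_Icc_self
  have hInorm : ‖∫ s in (0:ℝ)..θ, R s‖ ≤ M * θ * θ * θ := by
    have h1 : ∀ s ∈ Set.uIoc (0:ℝ) θ, ‖R s‖ ≤ M * θ * θ := by
      intro s hs
      have hs' := hIoc hs
      calc ‖R s‖ ≤ M * θ * |s - m| := hR s hs'
        _ ≤ M * θ * θ := mul_le_mul_of_nonneg_left (habs_le s hs')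
            (mul_nonneg hM0 hθ0)
    calc ‖∫ s in (0:ℝ)..θ, R s‖ ≤ M * θ * θ * |θ - 0| :=
          intervalIntegral.norm_integral_le_of_norm_le_const h1
      _ = M * θ * θ * θ := by rw [sub_zero, abs_of_nonneg hθ0]
  have hR0n : ‖R 0‖ ≤ M * θ * θ := by
    calc ‖R 0‖ ≤ M * θ * |0 - m| := hR 0 ⟨le_rfl, hθ0⟩
      _ ≤ M * θ * θ := mul_le_mul_of_nonneg_left (habs_le 0 ⟨le_rfl, hθ0⟩)
          (mul_nonneg hM0 hθ0)
  have hRθn : ‖R θ‖ ≤ M * θ * θ := by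
    calc ‖R θ‖ ≤ M * θ * |θ - m| := hR θ ⟨hθ0, le_rfl⟩
      _ ≤ M * θ * θ := mul_le_mul_of_nonneg_left (habs_le θ ⟨hθ0, le_rfl⟩)
          (mul_nonneg hM0 hθ0)
  have hB5 : ‖φ θ x - x - θ • V x‖ ≤ (L:ℝ) * c0 * E * P * (θ * θ) := by
    have h1 : IntervalIntegrable (fun _ : ℝ => V x) volume 0 θ := intervalIntegrable_const
    have hident : φ θ x - x - θ • V x = ∫ s in (0:ℝ)..θ, (V (φ s x) - V x) := by
      rw [intervalIntegral.integral_sub hgint h1, hFTC, intervalIntegral.integral_const,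
        sub_zero]
    rw [hident]
    have h2 : ∀ s ∈ Set.uIoc (0:ℝ) θ, ‖V (φ s x) - V x‖ ≤ (L:ℝ) * (c0 * P * E * θ) := by
      intro s hs
      have hs' := hIoc hs
      have hsT : s ∈ Icc (0:ℝ) T := hsub hs'
      have h3 := hVlip (φ s x) x
      have h4 := ha s hsT
      have h5 : c0 * P * E * s ≤ c0 * P * E * θ :=
        mul_le_mul_of_nonneg_left hs'.2
          (mul_nonneg (mul_nonneg hc0pos.le hP0.le) hEpos.le)
      nlinarith
    calc ‖∫ s in (0:ℝ)..θ, (V (φ s x) - V x)‖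
        ≤ (L:ℝ) * (c0 * P * E * θ) * |θ - 0| :=
          intervalIntegral.norm_integral_le_of_norm_le_const h2
      _ = (L:ℝ) * c0 * E * P * (θ * θ) := by
          rw [sub_zero, abs_of_nonneg hθ0]; ring
  have hlast : ‖(θ/2) • (V (φ θ x) - V (x + θ • V x))‖
      ≤ (θ/2) * ((L:ℝ) * ((L:ℝ) * c0 * E * P * (θ * θ))) := by
    rw [norm_smul, Real.norm_eq_abs, abs_of_nonneg (by linarith : (0:ℝ) ≤ θ/2)]
    apply mul_le_mul_of_nonneg_left _ (by linarith : (0:ℝ) ≤ θ/2)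
    have h1 := hVlip (φ θ x) (x + θ • V x)
    have h2 : φ θ x - (x + θ • V x) = φ θ x - x - θ • V x := by abel
    rw [h2] at h1
    calc ‖V (φ θ x) - V (x + θ • V x)‖ ≤ (L:ℝ) * ‖φ θ x - x - θ • V x‖ := h1
      _ ≤ (L:ℝ) * ((L:ℝ) * c0 * E * P * (θ * θ)) :=
          mul_le_mul_of_nonneg_left hB5 hL0
  -- assemble
  have hnorm4 : ‖((∫ s in (0:ℝ)..θ, R s) - (θ/2) • R 0 - (θ/2) • R θ)
        + (θ/2) • (V (φ θ x) - V (x + θ • V x))‖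
      ≤ ‖∫ s in (0:ℝ)..θ, R s‖ + ‖(θ/2) • R 0‖ + ‖(θ/2) • R θ‖
        + ‖(θ/2) • (V (φ θ x) - V (x + θ • V x))‖ := by
    calc _ ≤ ‖(∫ s in (0:ℝ)..θ, R s) - (θ/2) • R 0 - (θ/2) • R θ‖
          + ‖(θ/2) • (V (φ θ x) - V (x + θ • V x))‖ := norm_add_le _ _
      _ ≤ _ := by
          have h1 := norm_sub_le ((∫ s in (0:ℝ)..θ, R s) - (θ/2) • R 0) ((θ/2) • R θ)
          have h2 := norm_sub_le (∫ s in (0:ℝ)..θ, R s) ((θ/2) • R 0)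
          linarith
  have hsmul0 : ‖(θ/2) • R 0‖ ≤ (θ/2) * (M * θ * θ) := by
    rw [norm_smul, Real.norm_eq_abs, abs_of_nonneg (by linarith : (0:ℝ) ≤ θ/2)]
    exact mul_le_mul_of_nonneg_left hR0n (by linarith)
  have hsmulθ : ‖(θ/2) • R θ‖ ≤ (θ/2) * (M * θ * θ) := by
    rw [norm_smul, Real.norm_eq_abs, abs_of_nonneg (by linarith : (0:ℝ) ≤ θ/2)]
    exact mul_le_mul_of_nonneg_left hRθn (by linarith)
  have htotal : ‖((∫ s in (0:ℝ)..θ, R s) - (θ/2) • R 0 - (θ/2) • R θ)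
        + (θ/2) • (V (φ θ x) - V (x + θ • V x))‖
      ≤ (2 * M + (L:ℝ)^2 * c0 * E * P) * θ^3 := by
    have := hnorm4
    have hθ3 : M * θ * θ * θ + (θ/2) * (M * θ * θ) + (θ/2) * (M * θ * θ)
        + (θ/2) * ((L:ℝ) * ((L:ℝ) * c0 * E * P * (θ * θ)))
        = (2 * M + ((L:ℝ)^2 * c0 * E * P) / 2) * θ^3 := by ring
    have hle : (2 * M + ((L:ℝ)^2 * c0 * E * P) / 2) * θ^3
        ≤ (2 * M + (L:ℝ)^2 * c0 * E * P) * θ^3 := by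
      apply mul_le_mul_of_nonneg_right _ (pow_nonneg hθ0 3)
      have : (0:ℝ) ≤ (L:ℝ)^2 * c0 * E * P :=
        mul_nonneg (mul_nonneg (mul_nonneg (sq_nonneg _) hc0pos.le) hEpos.le) hP0.le
      linarith
    linarith
  refine le_trans htotal ?_
  -- final polynomial bookkeeping
  have hMP : 2 * M + (L:ℝ)^2 * c0 * E * P ≤ c6 * P ^ (r+2) := by
    have h1 : (L:ℝ)^2 * c0 * E * P ≤ (L:ℝ)^2 * c0 * E * P ^ (r+2) :=
      mul_le_mul_of_nonneg_left hPr2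
        (mul_nonneg (mul_nonneg (sq_nonneg _) hc0pos.le) hEpos.le)
    simp only [hMdef, hc6def]; nlinarith
  have hpoly : P ^ (r+2) ≤ 2 ^ (r+2) * (1 + ‖x‖ ^ (r+2)) := by
    simpa [hPdef] using aux_one_add_pow_le ‖x‖ (norm_nonneg x) (r+2)
  have hθ3 : (0:ℝ) ≤ θ^3 := pow_nonneg hθ0 3
  have hfin : (2 * M + (L:ℝ)^2 * c0 * E * P) * θ^3
      ≤ (c6 * 2 ^ (r+2) + 1) * (1 + ‖x‖ ^ (r+2)) * θ^3 := by
    apply mul_le_mul_of_nonneg_right _ hθ3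
    calc 2 * M + (L:ℝ)^2 * c0 * E * P ≤ c6 * P ^ (r+2) := hMP
      _ ≤ c6 * (2 ^ (r+2) * (1 + ‖x‖ ^ (r+2))) := mul_le_mul_of_nonneg_left hpoly hc6
      _ ≤ (c6 * 2 ^ (r+2) + 1) * (1 + ‖x‖ ^ (r+2)) := by
          have h1 : (0:ℝ) ≤ 1 + ‖x‖ ^ (r+2) := by positivity
          nlinarith
  exact hfin
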